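/- arXiv:2401.14862 — 2 statements merged into one kernel-verified Lean document; each statement's English description precedes it below -/
import Mathlib

section
/- Let g₁, …, g_k be automorphisms of the infinite rooted binary tree. The product g₁⋯g_k is an odometer if and only if for every permutation τ ∈ S_k and every tuple of 2-adic units ℓ₁, …, ℓ_k ∈ ℤ₂^×, the product g_{τ(1)}^{ℓ₁}⋯g_{τ(k)}^{ℓ_k} is an odometer. -/
namespace BinTree

/-- Vertices of the infinite rooted binary tree: finite words over `{0,1}`. -/
abbrev Vertex : Type := List Bool

/-- A function on vertices is a tree automorphism function if it preserves lengths
(levels) and prefixes. -/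
def IsTreeAutFun (f : Vertex → Vertex) : Prop :=
  (∀ v, (f v).length = v.length) ∧ ∀ v w : Vertex, (f (v ++ w)).take v.length = f v

/-- `Ω`: the automorphism group of the infinite rooted binary tree, realized as the
subgroup of permutations of the set of vertices preserving the tree structure. -/
def TreeAut : Subgroup (Equiv.Perm Vertex) where
  carrier := {e | IsTreeAutFun ⇑e}
  one_mem' := ⟨fun _ => rfl, fun v w => by
    simpa using List.take_left (l₁ := v) (l₂ := w)⟩
  mul_mem' := by
    rintro a b ha hb
    obtain ⟨ha1, ha2⟩ := ha
    obtain ⟨hb1, hb2⟩ := hb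
    refine ⟨fun v => ?_, fun v w => ?_⟩
    · simp [Equiv.Perm.mul_apply, ha1, hb1]
    · have hb' : b (v ++ w) = b v ++ (b (v ++ w)).drop v.length := by
        conv_lhs => rw [← List.take_append_drop v.length (b (v ++ w)), hb2]
      have hlen : (b v).length = v.length := hb1 v
      calc ((a * b) (v ++ w)).take v.length
          = (a (b v ++ (b (v ++ w)).drop v.length)).take v.length := by
            rw [Equiv.Perm.mul_apply, ← hb']
        _ = a (b v) := by rw [← hlen]; exact ha2 _ _
        _ = (a * b) v := rfl
  inv_mem' := by
    intro a ha
    obtain ⟨ha1, ha2⟩ := ha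
    show IsTreeAutFun ⇑a⁻¹
    have hlen : ∀ v : Vertex, (a⁻¹ v).length = v.length := by
      intro v
      have h := ha1 (a⁻¹ v)
      rw [show ∀ x, a (a⁻¹ x) = x from a.apply_symm_apply] at h
      exact h.symm ▸ rfl
    refine ⟨hlen, fun v w => ?_⟩
    have htl : ((a⁻¹ (v ++ w)).take v.length).length = v.length := by
      rw [List.length_take, hlen, List.length_append]
      omega
    have key : a ((a⁻¹ (v ++ w)).take v.length) = v := by
      have h2 := ha2 ((a⁻¹ (v ++ w)).take v.length) ((a⁻¹ (v ++ w)).drop v.length)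
      rw [List.take_append_drop, htl, show ∀ x, a (a⁻¹ x) = x from a.apply_symm_apply] at h2
      rw [← h2]
      simpa using List.take_left (l₁ := v) (l₂ := w)
    have h3 := congrArg (⇑a⁻¹) key
    rwa [show ∀ x, a⁻¹ (a x) = x from a.symm_apply_apply] at h3

/-- wreath recursion, forward map: `(g,h)σᵗ` -/
def wrFun (g h : Vertex → Vertex) (t : Bool) : Vertex → Vertex
  | [] => []
  | x :: v => (xor x t) :: (cond x (h v) (g v))

/-- wreath recursion, inverse map -/
def wrFunInv (g h : Vertex → Vertex) (t : Bool) : Vertex → Vertex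
  | [] => []
  | y :: w => (xor y t) :: (cond (xor y t) (h w) (g w))

/-- `(g,h)σᵗ` as a permutation of the vertices. -/
def wrPerm (g h : Equiv.Perm Vertex) (t : Bool) : Equiv.Perm Vertex where
  toFun := wrFun ⇑g ⇑h t
  invFun := wrFunInv ⇑g.symm ⇑h.symm t
  left_inv := by
    intro v
    cases v with
    | nil => rfl
    | cons x v => cases x <;> cases t <;> simp [wrFun, wrFunInv]
  right_inv := by
    intro v
    cases v with
    | nil => rfl
    | cons x v => cases x <;> cases t <;> simp [wrFun, wrFunInv]

/-- The element `(g,h)σᵗ` of `Ω`: acts on the first level by `σᵗ` (where `σ` is the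
swap of the two level-one subtrees), with section `g` at the vertex `0` and section
`h` at the vertex `1`.  Thus `(γ₀,γ₁)τ` of the wreath recursion
`Ω ≃ (Ω × Ω) ⋊ S₂` is `wr γ₀ γ₁ t` (`t = true` iff `τ = σ`). -/
def wr (g h : TreeAut) (t : Bool) : TreeAut :=
  ⟨wrPerm g.1 h.1 t, by
    have hg : IsTreeAutFun ⇑g.1 := g.2
    have hh : IsTreeAutFun ⇑h.1 := h.2
    constructor
    · intro v
      cases v with
      | nil => rfl
      | cons x v =>
        cases x <;> simp [wrPerm, wrFun, hg.1, hh.1]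
    · intro v w
      cases v with
      | nil => simp [wrPerm, wrFun]
      | cons x v =>
        cases x <;> simp [wrPerm, wrFun, hg.2, hh.2]⟩

/-- Application of a tree automorphism to a vertex. -/
def ap (γ : TreeAut) (v : Vertex) : Vertex := γ.1 v

/-- The permutation induced by `γ ∈ Ω` on level `n` of the tree. -/
def levelPerm (n : ℕ) (γ : TreeAut) : Equiv.Perm (List.Vector Bool n) where
  toFun v := ⟨γ.1 v.1, by
    have h : IsTreeAutFun ⇑γ.1 := γ.2
    rw [h.1 v.1]; exact v.2⟩
  invFun v := ⟨γ.1.symm v.1, by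
    have h : IsTreeAutFun ⇑γ.1 := γ.2
    have h2 := h.1 (γ.1.symm v.1)
    rw [Equiv.apply_symm_apply] at h2
    exact h2.symm.trans v.2⟩
  left_inv v := Subtype.ext (Equiv.symm_apply_apply _ _)
  right_inv v := Subtype.ext (Equiv.apply_symm_apply _ _)

/-- Restriction to level `n` as a group homomorphism. -/
def levelHom (n : ℕ) : TreeAut →* Equiv.Perm (List.Vector Bool n) where
  toFun := levelPerm n
  map_one' := Equiv.ext fun v => Subtype.ext rfl
  map_mul' := fun g h => Equiv.ext fun v => Subtype.ext rfl

/-- `sgn_n`: the sign of the permutation induced on level `n`. -/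
def sgn (n : ℕ) (γ : TreeAut) : ℤˣ := Equiv.Perm.sign (levelPerm n γ)

/-- An odometer: acts as a single `2^n`-cycle on each level `n ≥ 1`. -/
def IsOdometer (γ : TreeAut) : Prop :=
  ∀ n : ℕ, 1 ≤ n → (levelPerm n γ).IsCycle ∧ (levelPerm n γ).support = Finset.univ

/-- The profinite topology on `Ω`: the coarsest topology making all level
restrictions (to the discrete finite groups) continuous. -/
instance : TopologicalSpace TreeAut :=
  ⨅ n : ℕ, TopologicalSpace.induced (levelPerm n) ⊥

/-- A vertex `w` is in a stable cycle of `γ` of length `k`: its `γ`-orbit has exactly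
`k` elements, and for every level `m` above the level of `w`, all level-`m` vertices
lying above this orbit are in one single `γ`-cycle (necessarily of length
`2^(m - n) * k`, which we record via the periodicity condition). -/
def InStableCycle (γ : TreeAut) (w : Vertex) (k : ℕ) : Prop :=
  0 < k ∧ ap (γ ^ k) w = w ∧ (∀ j : ℕ, 0 < j → j < k → ap (γ ^ j) w ≠ w) ∧
  (∀ u : Vertex, w.length < u.length → (∃ i : ℕ, u.take w.length = ap (γ ^ i) w) →
    (ap (γ ^ (2 ^ (u.length - w.length) * k)) u = u ∧
      ∀ u' : Vertex, u'.length = u.length →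
        (∃ i : ℕ, u'.take w.length = ap (γ ^ i) w) → ∃ j : ℕ, ap (γ ^ j) u = u'))

/-- Self-similar subgroup: closed under taking sections (here the section of `γ` at
the first-level vertex `x` is characterized by `(xv)γ = (x)γ ⬝ (v)γₓ`). -/
def SelfSimilar (H : Subgroup TreeAut) : Prop :=
  ∀ γ ∈ H, ∀ x : Bool, ∀ δ : TreeAut,
    (∀ v : Vertex, ap γ (x :: v) = ap γ [x] ++ ap δ v) → δ ∈ H


/-! ### Auxiliary lemmas -/

lemma ap_take (γ : TreeAut) (v : Vertex) (m : ℕ) (hm : m ≤ v.length) :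
    (ap γ v).take m = ap γ (v.take m) := by
  obtain ⟨h1, h2⟩ := γ.2
  have h := h2 (v.take m) (v.drop m)
  rw [List.take_append_drop, List.length_take, min_eq_left hm] at h
  exact h

/-- Projection from level `n+1` to level `n`. -/
def projV (n : ℕ) (v : List.Vector Bool (n + 1)) : List.Vector Bool n :=
  ⟨v.1.take n, by rw [List.length_take, v.2]; omega⟩

lemma projV_levelPerm (γ : TreeAut) (n : ℕ) (v : List.Vector Bool (n + 1)) :
    projV n (levelPerm (n + 1) γ v) = levelPerm n γ (projV n v) := by
  apply Subtype.ext
  show ((γ.1 : Equiv.Perm Vertex) v.1).take n = (γ.1 : Equiv.Perm Vertex) (v.1.take n)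
  exact ap_take γ v.1 n (by rw [v.2]; omega)

lemma projV_levelPerm_pow (γ : TreeAut) (n p : ℕ) (v : List.Vector Bool (n + 1)) :
    projV n ((levelPerm (n + 1) γ ^ p) v) = (levelPerm n γ ^ p) (projV n v) := by
  induction p with
  | zero => simp
  | succ p ih =>
      rw [pow_succ', pow_succ', Equiv.Perm.mul_apply, Equiv.Perm.mul_apply,
        projV_levelPerm, ih]

lemma card_level (n : ℕ) : Fintype.card (List.Vector Bool n) = 2 ^ n := by
  rw [card_vector, Fintype.card_bool]

/-- Any permutation of a 2-element type with sign `-1` is a full cycle. -/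
lemma perm_card_two_cycle {α : Type*} [DecidableEq α] [Fintype α]
    (hcard : Fintype.card α = 2) (σ : Equiv.Perm α) (hs : Equiv.Perm.sign σ = -1) :
    σ.IsCycle ∧ σ.support = Finset.univ := by
  have hne : σ ≠ 1 := by rintro rfl; simp at hs
  have h0 : σ.support ≠ ∅ := by
    rw [Ne, Equiv.Perm.support_eq_empty_iff]; exact hne
  have h1 : σ.support.card ≠ 0 := by
    simpa [Finset.card_eq_zero] using h0
  have h2 : σ.support.card ≤ 2 := by
    calc σ.support.card ≤ Finset.univ.card := Finset.card_le_univ _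
      _ = 2 := by rw [Finset.card_univ, hcard]
  have h3 : σ.support.card ≠ 1 := Equiv.Perm.card_support_ne_one σ
  have h4 : σ.support.card = 2 := by omega
  refine ⟨(Equiv.Perm.card_support_eq_two.mp h4).isCycle, ?_⟩
  apply Finset.eq_univ_of_card
  rw [h4, hcard]

/-- Induction step: full cycle at level `n` plus sign `-1` at level `n+1` yields a
full cycle at level `n+1`. -/
lemma level_step (γ : TreeAut) (n : ℕ) (hn : 1 ≤ n)
    (hcyc : (levelPerm n γ).IsCycle) (hsup : (levelPerm n γ).support = Finset.univ)
    (hsgn : sgn (n + 1) γ = -1) :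
    (levelPerm (n + 1) γ).IsCycle ∧ (levelPerm (n + 1) γ).support = Finset.univ := by
  classical
  set σ := levelPerm (n + 1) γ with hσ
  set τ := levelPerm n γ with hτ
  have horder : orderOf τ = 2 ^ n := by
    rw [Equiv.Perm.IsCycle.orderOf hcyc, hsup, Finset.card_univ, card_level]
  have key : ∀ (x : List.Vector Bool (n + 1)) (p : ℕ), (σ ^ p) x = x → 2 ^ n ∣ p := by
    intro x p hp
    have hmem : τ (projV n x) ≠ projV n x :=
      Equiv.Perm.mem_support.mp (hsup ▸ Finset.mem_univ (projV n x))
    have hτp : (τ ^ p) (projV n x) = projV n x := by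
      rw [← projV_levelPerm_pow, hp]
    have h1 : τ ^ p = 1 := (hcyc.pow_eq_one_iff' hmem).mpr hτp
    exact horder ▸ orderOf_dvd_of_pow_eq_one h1
  have h2n : 2 ≤ 2 ^ n := by
    calc 2 = 2 ^ 1 := (pow_one 2).symm
      _ ≤ 2 ^ n := Nat.pow_le_pow_right (by norm_num) hn
  have hsupp : σ.support = Finset.univ := by
    refine Finset.eq_univ_iff_forall.mpr fun x => Equiv.Perm.mem_support.mpr fun hfix => ?_
    have hd : 2 ^ n ∣ 1 := key x 1 (by simpa using hfix)
    have := Nat.le_of_dvd one_pos hd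
    omega
  have hentry : ∀ a ∈ σ.cycleType, 2 ^ n ∣ a := by
    intro a ha
    rw [Equiv.Perm.cycleType_def, Multiset.mem_map] at ha
    obtain ⟨c, hc, rfl⟩ := ha
    have hcm : c ∈ σ.cycleFactorsFinset := hc
    have hcyc' : c.IsCycle := (Equiv.Perm.mem_cycleFactorsFinset_iff.mp hcm).1
    obtain ⟨x, hx, -⟩ := id hcyc'
    have hxs : x ∈ c.support := Equiv.Perm.mem_support.mpr hx
    have hcx : c = σ.cycleOf x := Equiv.Perm.cycle_is_cycleOf hxs hcm
    have hc1 : c ^ ((Finset.card ∘ Equiv.Perm.support) c) = 1 := by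
      have : orderOf c = c.support.card := Equiv.Perm.IsCycle.orderOf hcyc'
      simpa [Function.comp, ← this] using pow_orderOf_eq_one c
    have hσx : (σ ^ ((Finset.card ∘ Equiv.Perm.support) c)) x = x := by
      rw [← Equiv.Perm.cycleOf_pow_apply_self, ← hcx, hc1, Equiv.Perm.one_apply]
    exact key x _ hσx
  have hsum : σ.cycleType.sum = 2 ^ (n + 1) := by
    rw [Equiv.Perm.sum_cycleType, hsupp, Finset.card_univ, card_level]
  set cn := Multiset.card σ.cycleType with hcn
  have hcard_le : 2 ^ n * cn ≤ 2 ^ (n + 1) := by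
    have h := Multiset.card_nsmul_le_sum (fun a ha => Nat.le_of_dvd
      (lt_of_lt_of_le (by norm_num) (Equiv.Perm.two_le_of_mem_cycleType ha)) (hentry a ha))
    rw [hsum] at h
    simpa [smul_eq_mul, mul_comm] using h
  have hcn_le : cn ≤ 2 := by
    have : 2 ^ (n + 1) = 2 ^ n * 2 := by ring
    rw [this] at hcard_le
    have h2pos : 0 < 2 ^ n := Nat.pow_pos (by norm_num)
    exact Nat.le_of_mul_le_mul_left hcard_le h2pos
  have hcn_ne : cn ≠ 0 := by
    intro h0
    have : σ.cycleType = 0 := Multiset.card_eq_zero.mp (hcn ▸ h0)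
    rw [this] at hsum
    simp at hsum
    omega
  have hsign : Equiv.Perm.sign σ = (-1 : ℤˣ) ^ (σ.cycleType.sum + cn) :=
    Equiv.Perm.sign_of_cycleType σ
  have hsgn' : (-1 : ℤˣ) ^ (2 ^ (n + 1) + cn) = -1 := by
    rw [← hsum, ← hsign]
    exact hsgn
  have heven : Even (2 ^ (n + 1)) := Nat.even_pow.mpr ⟨even_two, Nat.succ_ne_zero n⟩
  have hcn1 : cn = 1 := by
    rcases Nat.lt_or_ge cn 2 with h | h
    · omega
    · exfalso
      have hcn2 : cn = 2 := by omega
      have : Even (2 ^ (n + 1) + cn) := by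
        rw [hcn2]; exact heven.add (by norm_num)
      rw [this.neg_one_pow] at hsgn'
      exact absurd hsgn' (by decide)
  exact ⟨Equiv.Perm.card_cycleType_eq_one.mp hcn1, hsupp⟩

/-- The sign homomorphism at level `n`. -/
def sgnHom (n : ℕ) : TreeAut →* ℤˣ := Equiv.Perm.sign.comp (levelHom n)

lemma sgn_eq_sgnHom (n : ℕ) (γ : TreeAut) : sgn n γ = sgnHom n γ := rfl

/-- A tree automorphism is an odometer iff all level signs are `-1`. -/
lemma isOdometer_iff_sgn (γ : TreeAut) :
    IsOdometer γ ↔ ∀ n : ℕ, 1 ≤ n → sgn n γ = -1 := by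
  constructor
  · intro h n hn
    obtain ⟨hc, hs⟩ := h n hn
    have hcard : (levelPerm n γ).support.card = 2 ^ n := by
      rw [hs, Finset.card_univ, card_level]
    have heven : Even (2 ^ n) := Nat.even_pow.mpr ⟨even_two, by omega⟩
    rw [sgn, hc.sign, hcard, heven.neg_one_pow]
  · intro h n hn
    induction n, hn using Nat.le_induction with
    | base =>
        exact perm_card_two_cycle (by rw [card_level]; norm_num) _ (h 1 le_rfl)
    | succ n hn ih =>
        obtain ⟨hc, hs⟩ := ih
        exact level_step γ n hn hc hs (h (n + 1) (by omega))

lemma odd_appr {ℓ : ℤ_[2]} (h : IsUnit ℓ) (m : ℕ) (hm : 1 ≤ m) : Odd (ℓ.appr m) := by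
  rw [Nat.odd_iff, ← Nat.not_even_iff]
  intro heven
  have hdvd : (2 : ℤ_[2]) ∣ (ℓ.appr m : ℤ_[2]) := by
    obtain ⟨c, hc⟩ := heven
    refine ⟨(c : ℤ_[2]), ?_⟩
    rw [hc]; push_cast; ring
  have hspec := PadicInt.appr_spec m ℓ
  rw [Ideal.mem_span_singleton] at hspec
  have hdvd2 : (2 : ℤ_[2]) ∣ ℓ - (ℓ.appr m : ℤ_[2]) :=
    dvd_trans (dvd_pow_self (2 : ℤ_[2]) (by omega)) hspec
  have : (2 : ℤ_[2]) ∣ ℓ := by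
    have := dvd_add hdvd2 hdvd
    simpa using this
  have hlt : ‖ℓ‖ < 1 := (PadicInt.norm_lt_one_iff_dvd ℓ).mpr (by exact_mod_cast this)
  rw [PadicInt.isUnit_iff.mp h] at hlt
  exact lt_irrefl 1 hlt

lemma appr_one (m : ℕ) (hm : 1 ≤ m) : (1 : ℤ_[2]).appr m = 1 := by
  have hspec := PadicInt.appr_spec m (1 : ℤ_[2])
  rw [Ideal.mem_span_singleton] at hspec
  have hlt := PadicInt.appr_lt (1 : ℤ_[2]) m
  set a := (1 : ℤ_[2]).appr m with ha
  have hcast : (1 : ℤ_[2]) - (a : ℤ_[2]) = ((1 - (a : ℤ) : ℤ) : ℤ_[2]) := by push_cast; ring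
  have hdvdZ : (((2 : ℕ) : ℤ) ^ m) ∣ (1 - (a : ℤ)) := by
    rw [← PadicInt.norm_int_le_pow_iff_dvd, ← hcast]
    obtain ⟨c, hc⟩ := hspec
    have hn2 : ‖(((2 : ℕ) : ℤ_[2]))‖ = (((2 : ℕ) : ℝ))⁻¹ := PadicInt.norm_p
    rw [hc, norm_mul, norm_pow, hn2]
    calc (((2 : ℕ) : ℝ))⁻¹ ^ m * ‖c‖ ≤ (((2 : ℕ) : ℝ))⁻¹ ^ m * 1 :=
          mul_le_mul_of_nonneg_left (PadicInt.norm_le_one c) (by positivity)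
      _ = (((2 : ℕ) : ℝ)) ^ (-(m : ℤ)) := by
          rw [mul_one, zpow_neg, zpow_natCast, inv_pow]
  have habs : (1 - (a : ℤ)) = 0 := by
    by_contra hne
    have hd : (((2 : ℕ) : ℤ)) ^ m ∣ |1 - (a : ℤ)| := (dvd_abs _ _).mpr hdvdZ
    have hle := Int.le_of_dvd (abs_pos.mpr hne) hd
    have hm2 : (2 : ℤ) ≤ (((2 : ℕ) : ℤ)) ^ m := by
      calc (2 : ℤ) = (((2 : ℕ) : ℤ)) ^ 1 := by norm_num
        _ ≤ _ := pow_le_pow_right₀ (by norm_num) hm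
    have haInt : (a : ℤ) < (((2 : ℕ) : ℤ)) ^ m := by exact_mod_cast hlt
    have h0a : (0 : ℤ) ≤ (a : ℤ) := Int.natCast_nonneg a
    rcases abs_cases (1 - (a : ℤ)) with ⟨he, _⟩ | ⟨he, _⟩ <;> omega
  omega

lemma units_pow_odd (x : ℤˣ) {m : ℕ} (hm : Odd m) : x ^ m = x := by
  obtain ⟨j, hj⟩ := hm
  rw [hj, pow_add, pow_mul, Int.units_sq, one_pow, one_mul, pow_one]

/-- Convergence in the profinite topology implies eventual agreement at each level. -/
lemma eventually_levelPerm_eq {f : ℕ → TreeAut} {h : TreeAut}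
    (hf : Filter.Tendsto f Filter.atTop (nhds h)) (n : ℕ) :
    ∀ᶠ m in Filter.atTop, levelPerm n (f m) = levelPerm n h := by
  letI tb : TopologicalSpace (Equiv.Perm (List.Vector Bool n)) := ⊥
  haveI : DiscreteTopology (Equiv.Perm (List.Vector Bool n)) :=
    discreteTopology_bot _
  have hcont : Continuous (levelPerm n : TreeAut → Equiv.Perm (List.Vector Bool n)) := by
    rw [continuous_iff_le_induced]
    exact iInf_le (fun n => TopologicalSpace.induced (levelPerm n) ⊥) n
  have := (hcont.tendsto h).comp hf
  rw [nhds_discrete] at this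
  have h2 := Filter.tendsto_pure.mp this
  simpa [Function.comp] using h2

lemma sgnHom_prod_ofFn_reverse (n : ℕ) {k : ℕ} (f : Fin k → TreeAut) :
    sgnHom n ((List.ofFn f).reverse.prod) = ∏ i, sgnHom n (f i) := by
  rw [map_list_prod, List.map_reverse, List.prod_reverse, List.map_ofFn, List.prod_ofFn]
  rfl

/-- `g₁⋯g_k` is an odometer iff for every permutation `τ ∈ S_k` and
2-adic units `ℓ₁,…,ℓ_k ∈ ℤ₂ˣ`, `g_{τ(1)}^{ℓ₁}⋯g_{τ(k)}^{ℓ_k}` is an odometer.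
(The paper composes automorphisms left-to-right, so a word `x₁x₂⋯x_m` corresponds
to `(List.ofFn x).reverse.prod` for left-applied permutations; the 2-adic power
`g^ℓ` is the limit in `Ω` of `g^{ℓ_n}` over integer approximations `ℓ_n` of `ℓ`.) -/
theorem prod_odometer_iff_perm_unit_pows (k : ℕ) (hk : 1 ≤ k) (g : Fin k → TreeAut) :
    IsOdometer ((List.ofFn g).reverse.prod) ↔
      ∀ (τ : Equiv.Perm (Fin k)) (ℓ : Fin k → ℤ_[2]), (∀ i, IsUnit (ℓ i)) →
        ∀ h : TreeAut,
          Filter.Tendsto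
            (fun m : ℕ =>
              (List.ofFn (fun i : Fin k => g (τ i) ^ ((ℓ i).appr m))).reverse.prod)
            Filter.atTop (nhds h) →
          IsOdometer h := by
  constructor
  · intro hodo τ ℓ hℓ h htend
    have hsgn : ∀ n : ℕ, 1 ≤ n → sgn n ((List.ofFn g).reverse.prod) = -1 :=
      (isOdometer_iff_sgn _).mp hodo
    rw [isOdometer_iff_sgn]
    intro n hn
    obtain ⟨M, hM⟩ := Filter.eventually_atTop.mp (eventually_levelPerm_eq htend n)
    set m := max M 1 with hm
    have hm1 : 1 ≤ m := le_max_right _ _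
    have heq : levelPerm n
        ((List.ofFn (fun i : Fin k => g (τ i) ^ ((ℓ i).appr m))).reverse.prod)
        = levelPerm n h := hM m (le_max_left _ _)
    have h1 : sgn n h = sgnHom n
        ((List.ofFn (fun i : Fin k => g (τ i) ^ ((ℓ i).appr m))).reverse.prod) := by
      rw [sgn_eq_sgnHom]
      show Equiv.Perm.sign (levelPerm n h) = Equiv.Perm.sign (levelPerm n _)
      rw [heq]
    rw [h1, sgnHom_prod_ofFn_reverse]
    have h2 : ∀ i : Fin k, sgnHom n (g (τ i) ^ ((ℓ i).appr m)) = sgnHom n (g (τ i)) := by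
      intro i
      rw [map_pow]
      exact units_pow_odd _ (odd_appr (hℓ i) m hm1)
    calc (∏ i, sgnHom n (g (τ i) ^ ((ℓ i).appr m)))
        = ∏ i, sgnHom n (g (τ i)) := Finset.prod_congr rfl fun i _ => h2 i
      _ = ∏ i, sgnHom n (g i) := Equiv.prod_comp τ (fun i => sgnHom n (g i))
      _ = sgnHom n ((List.ofFn g).reverse.prod) := (sgnHom_prod_ofFn_reverse n g).symm
      _ = -1 := hsgn n hn
  · intro hyp
    refine hyp 1 (fun _ => (1 : ℤ_[2])) (fun _ => isUnit_one) _ ?_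
    refine Filter.Tendsto.congr' ?_ (tendsto_const_nhds
      (x := (List.ofFn g).reverse.prod))
    rw [Filter.EventuallyEq, Filter.eventually_atTop]
    refine ⟨1, fun m hm => ?_⟩
    have hfun : (fun i : Fin k =>
        g ((1 : Equiv.Perm (Fin k)) i) ^ (((fun _ : Fin k => (1 : ℤ_[2])) i).appr m)) = g := by
      funext i
      simp [appr_one m hm]
    rw [hfun]

end BinTree
end

section
/- Fix integers r ≥ 3 and 1 < s ≤ r, and define a₁,…,a_r ∈ Ω recursively by a₁ = (a_r, id)σ, a_i = (id, a_{i−1}) for 2 ≤ i ≤ s−1, a_s = (id, a_{s−1})σ, and a_i = (a_{i−1}, id) for s+1 ≤ i ≤ r. Then the product a₁a₂⋯a_r is the identity automorphism of the tree. -/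
namespace BinTree

/-! ### Auxiliary lemmas -/

lemma ap_nil (γ : TreeAut) : ap γ [] = [] := by
  have h := γ.2.1 ([] : Vertex)
  exact List.length_eq_zero_iff.mp h

lemma ap_one (v : Vertex) : ap 1 v = v := rfl

lemma ap_wr (g h : TreeAut) (t : Bool) (x : Bool) (v : Vertex) :
    ap (wr g h t) (x :: v) = (xor x t) :: cond x (ap h v) (ap g v) := rfl

lemma wr_mul (g1 h1 g2 h2 : TreeAut) (t1 t2 : Bool) :
    wr g1 h1 t1 * wr g2 h2 t2 =
      wr (cond t2 (h1 * g2) (g1 * g2)) (cond t2 (g1 * h2) (h1 * h2)) (xor t1 t2) := by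
  apply Subtype.ext
  apply Equiv.ext
  intro v
  cases v with
  | nil => cases t1 <;> cases t2 <;> rfl
  | cons x v => cases x <;> cases t1 <;> cases t2 <;> rfl

lemma wr_one : wr 1 1 false = 1 := by
  apply Subtype.ext
  apply Equiv.ext
  intro v
  cases v with
  | nil => rfl
  | cons x v => cases x <;> rfl

lemma wr_inv_false (g h : TreeAut) : (wr g h false)⁻¹ = wr g⁻¹ h⁻¹ false := by
  apply inv_eq_of_mul_eq_one_right
  rw [wr_mul]
  simpa using wr_one

lemma wr_inv_true (g h : TreeAut) : (wr g h true)⁻¹ = wr h⁻¹ g⁻¹ true := by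
  apply inv_eq_of_mul_eq_one_right
  rw [wr_mul]
  simpa using wr_one

/-- peel the last factor of `(List.ofFn f).reverse.prod` -/
lemma revProd_top {M : Type*} [Monoid M] {n : ℕ} (f : Fin (n + 1) → M) :
    (List.ofFn f).reverse.prod
      = f (Fin.last n) * (List.ofFn fun i : Fin n => f i.castSucc).reverse.prod := by
  rw [List.ofFn_succ', List.concat_eq_append, List.reverse_append]
  simp

/-- peel the first factor of `(List.ofFn f).reverse.prod` -/
lemma revProd_bot {M : Type*} [Monoid M] {n : ℕ} (f : Fin (n + 1) → M) :
    (List.ofFn f).reverse.prod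
      = (List.ofFn fun i : Fin n => f i.succ).reverse.prod * f 0 := by
  rw [List.ofFn_succ, List.reverse_cons]
  simp

/-- cyclic partial products: `a (m+k-1) * ⋯ * a (m+1) * a m` -/
def cycProd {r : ℕ} (a : ZMod r → TreeAut) (m k : ℕ) : TreeAut :=
  (List.ofFn fun i : Fin k => a (((m + (i : ℕ)) : ℕ) : ZMod r)).reverse.prod

lemma cycProd_one {r : ℕ} (a : ZMod r → TreeAut) (m : ℕ) :
    cycProd a m 1 = a ((m : ℕ) : ZMod r) := by
  simp [cycProd]

lemma cycProd_top {r : ℕ} (a : ZMod r → TreeAut) (m k : ℕ) :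
    cycProd a m (k + 1) = a (((m + k : ℕ)) : ZMod r) * cycProd a m k := by
  unfold cycProd
  rw [revProd_top]
  simp [Fin.val_last, Fin.coe_castSucc]

lemma cycProd_bot {r : ℕ} (a : ZMod r → TreeAut) (m k : ℕ) :
    cycProd a m (k + 1) = cycProd a (m + 1) k * a ((m : ℕ) : ZMod r) := by
  unfold cycProd
  rw [revProd_bot]
  have h : (fun i : Fin k =>
        a (((m + ((i.succ : Fin (k + 1)) : ℕ)) : ℕ) : ZMod r))
      = fun i : Fin k => a (((m + 1 + (i : ℕ)) : ℕ) : ZMod r) := by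
    funext i
    have : m + ((i.succ : Fin (k + 1)) : ℕ) = m + 1 + (i : ℕ) := by
      simp [Fin.val_succ]; omega
    rw [this]
  rw [h]
  simp


lemma wr_conj_false (u w A B : TreeAut) :
    wr u w false * wr A B false * (wr u w false)⁻¹
      = wr (u * A * u⁻¹) (w * B * w⁻¹) false := by
  rw [wr_inv_false, wr_mul, wr_mul]
  simp

lemma wr_conj_true (u w A B : TreeAut) :
    wr u w true * wr A B false * (wr u w true)⁻¹
      = wr (w * B * w⁻¹) (u * A * u⁻¹) false := by
  rw [wr_inv_true, wr_mul, wr_mul]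
  simp

/-- the recursively defined generators satisfy a₁a₂⋯a_r = id
(the paper composes left-to-right, whence the reversed Lean product). -/
theorem prod_gens_eq_one
    (r s : ℕ) (hr : 3 ≤ r) (hs1 : 1 < s) (hsr : s ≤ r)
    (a : ZMod r → TreeAut)
    (ha1 : a 1 = wr (a (r : ZMod r)) 1 true)
    (hmid : ∀ i : ℕ, 2 ≤ i → i ≤ s - 1 → a (i : ZMod r) = wr 1 (a ((i - 1 : ℕ) : ZMod r)) false)
    (has : a (s : ZMod r) = wr 1 (a ((s - 1 : ℕ) : ZMod r)) true)
    (hhi : ∀ i : ℕ, s + 1 ≤ i → i ≤ r → a (i : ZMod r) = wr (a ((i - 1 : ℕ) : ZMod r)) 1 false)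
    :
    (List.ofFn (fun i : Fin r => a (((i : ℕ) + 1 : ℕ) : ZMod r))).reverse.prod = 1 := by
  have ha0 : a (r : ZMod r) = a ((0 : ℕ) : ZMod r) := by
    norm_num [ZMod.natCast_self]
  -- cyclic conjugation relation between consecutive full cyclic products
  have hconj : ∀ m : ℕ, cycProd a (m + 1) r
      = a ((m : ℕ) : ZMod r) * cycProd a m r * (a ((m : ℕ) : ZMod r))⁻¹ := by
    intro m
    obtain ⟨n, rfl⟩ : ∃ n, r = n + 1 := ⟨r - 1, by omega⟩
    have h1 := cycProd_top a (m + 1) n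
    have h2 := cycProd_bot a m n
    have h3 : (((m + 1 + n : ℕ)) : ZMod (n + 1)) = ((m : ℕ) : ZMod (n + 1)) := by
      have h4 : ((n + 1 : ℕ) : ZMod (n + 1)) = 0 := ZMod.natCast_self _
      have h5 : m + 1 + n = m + (n + 1) := by omega
      rw [h5, Nat.cast_add, h4, add_zero]
    rw [h1, h3, h2]
    simp [mul_assoc]
  -- telescoping computation of the partial products a_k ⋯ a_2 a_1
  have htele : ∀ k : ℕ, 1 ≤ k → k ≤ r →
      (k < s → cycProd a 1 k = wr (cycProd a 0 k) 1 true) ∧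
      (s ≤ k → cycProd a 1 k = wr (cycProd a 0 k) 1 false) := by
    intro k
    induction k with
    | zero => exact fun h => absurd h (by omega)
    | succ k ih =>
      intro _ hkr
      rcases Nat.eq_zero_or_pos k with hk0 | hk1
      · subst hk0
        simp only [Nat.zero_add]
        constructor
        · intro _
          rw [cycProd_one, cycProd_one, Nat.cast_one, ha1, ha0]
        · intro hs'
          exact absurd hs' (by omega)
      · have IH := ih hk1 (by omega)
        rw [cycProd_top a 1 k, cycProd_top a 0 k]
        have h1k : ((1 + k : ℕ) : ZMod r) = (((k + 1 : ℕ)) : ZMod r) := by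
          rw [Nat.add_comm]
        have h0k : ((0 + k : ℕ) : ZMod r) = ((k : ℕ) : ZMod r) := by
          rw [Nat.zero_add]
        rw [h1k, h0k]
        constructor
        · intro hlt
          rw [hmid (k + 1) (by omega) (by omega),
            show (k + 1 - 1 : ℕ) = k from by omega, IH.1 (by omega), wr_mul]
          simp
        · intro hs'
          rcases eq_or_lt_of_le hs' with heq | hlt'
          · rw [show ((k + 1 : ℕ) : ZMod r) = ((s : ℕ) : ZMod r) from by rw [heq], has,
              show (s - 1 : ℕ) = k from by omega, IH.1 (by omega), wr_mul]
            simp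
          · rw [hhi (k + 1) (by omega) (by omega),
              show (k + 1 - 1 : ℕ) = k from by omega, IH.2 (by omega), wr_mul]
            simp
  -- wrap-around: `cycProd a r r = cycProd a 0 r`
  have hr0 : cycProd a r r = cycProd a 0 r := by
    unfold cycProd
    have h : (fun i : Fin r => a (((r + (i : ℕ)) : ℕ) : ZMod r))
        = fun i : Fin r => a (((0 + (i : ℕ)) : ℕ) : ZMod r) := by
      funext i
      have : ((r + (i : ℕ) : ℕ) : ZMod r) = ((0 + (i : ℕ) : ℕ) : ZMod r) := by
        push_cast [ZMod.natCast_self]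
        ring
      rw [this]
    rw [h]
  -- the structure of every cyclic shift of the full product
  have hform : ∀ k : ℕ, 1 ≤ k → k ≤ r →
      (2 ≤ k → k ≤ s → cycProd a k r = wr 1 (cycProd a (k - 1) r) false) ∧
      ((k = 1 ∨ s + 1 ≤ k) → cycProd a k r = wr (cycProd a (k - 1) r) 1 false) := by
    intro k
    induction k with
    | zero => exact fun h => absurd h (by omega)
    | succ k ih =>
      intro _ hkr
      rcases Nat.eq_zero_or_pos k with hk0 | hk1
      · subst hk0
        refine ⟨fun h _ => absurd h (by omega), fun _ => ?_⟩
        simpa using (htele r (by omega) le_rfl).2 hsr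
      · have IH := ih hk1 (by omega)
        have hc := hconj k
        have hprev : cycProd a k r
            = a (((k - 1 : ℕ)) : ZMod r) * cycProd a (k - 1) r
                * (a (((k - 1 : ℕ)) : ZMod r))⁻¹ := by
          have h := hconj (k - 1)
          rwa [show k - 1 + 1 = k from by omega] at h
        rcases Nat.lt_or_ge k 2 with hk2 | hk2
        · -- k = 1
          have hk1' : k = 1 := by omega
          subst hk1'
          refine ⟨fun _ _ => ?_, fun hor => ?_⟩
          · have hA : ((1 : ℕ) : ZMod r) = (1 : ZMod r) := Nat.cast_one
            have h2 : a (r : ZMod r) * cycProd a 0 r * (a (r : ZMod r))⁻¹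
                = cycProd a 1 r := by
              rw [ha0]
              simpa using (hconj 0).symm
            conv_lhs => rw [hc, hA, ha1, IH.2 (Or.inl rfl),
              show (1 - 1 : ℕ) = 0 from by norm_num]
            rw [wr_conj_true, h2]
            simp
          · rcases hor with h1 | h1 <;> omega
        · -- k ≥ 2
          constructor
          · intro _ hks
            conv_lhs => rw [hc, hmid k (by omega) (by omega),
              IH.1 (by omega) (by omega)]
            rw [wr_conj_false, ← hprev]
            simp [Nat.add_sub_cancel]
          · intro hor
            have hsk : s ≤ k := by rcases hor with h1 | h1 <;> omega
            rcases eq_or_lt_of_le hsk with heq | hlt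
            · conv_lhs => rw [hc,
                show ((k : ℕ) : ZMod r) = ((s : ℕ) : ZMod r) from by rw [heq], has,
                show ((s - 1 : ℕ) : ZMod r) = ((k - 1 : ℕ) : ZMod r) from by rw [heq],
                IH.1 (by omega) (by omega)]
              rw [wr_conj_true, ← hprev]
              simp [Nat.add_sub_cancel]
            · conv_lhs => rw [hc, hhi k (by omega) (by omega),
                IH.2 (Or.inr (by omega))]
              rw [wr_conj_false, ← hprev]
              simp [Nat.add_sub_cancel]
  -- level-by-level triviality
  have hfix : ∀ v : Vertex, ∀ k : ℕ, 1 ≤ k → k ≤ r → ap (cycProd a k r) v = v := by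
    intro v
    induction v with
    | nil => exact fun k _ _ => ap_nil _
    | cons x v ihv =>
      intro k hk1 hkr
      have hprevfix : ap (cycProd a (k - 1) r) v = v := by
        rcases eq_or_lt_of_le hk1 with h1 | h2
        · rw [show k - 1 = 0 from by omega, ← hr0]
          exact ihv r (by omega) le_rfl
        · exact ihv (k - 1) (by omega) (by omega)
      have hf := hform k hk1 hkr
      rcases Nat.lt_or_ge k 2 with hk2 | hk2
      · rw [hf.2 (Or.inl (by omega)), ap_wr]
        cases x <;> simp [hprevfix, ap_one]
      · rcases le_or_gt k s with hks | hks
        · rw [hf.1 hk2 hks, ap_wr]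
          cases x <;> simp [hprevfix, ap_one]
        · rw [hf.2 (Or.inr (by omega)), ap_wr]
          cases x <;> simp [hprevfix, ap_one]
  have hone : cycProd a 1 r = 1 := by
    apply Subtype.ext
    apply Equiv.ext
    intro v
    exact hfix v 1 le_rfl (by omega)
  have hfn : (List.ofFn fun i : Fin r => a ((((i : ℕ) + 1 : ℕ)) : ZMod r))
      = List.ofFn fun i : Fin r => a (((1 + (i : ℕ) : ℕ)) : ZMod r) := by
    congr 1
    funext i
    rw [Nat.add_comm]
  rw [hfn]
  exact hone


end BinTree
end
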